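/- Blow-up rate: let u: V × [0,T) → ℝ be a nonnegative solution of ∂_t u = Δu - au + u^p on a finite weighted graph with ‖u(·,t)‖_{L∞(V)} → +∞ as t → T⁻. Then lim_{t→T⁻} (T - t) (max_{x∈V} u(x,t))^{p-1} = 1/(p-1). -/

import Mathlib

open Finset Real

noncomputable section

/-- A finite weighted graph: positive vertex measure `mu`, symmetric nonnegative
edge weights `w` (an edge `x ∼ y` is present iff `0 < w x y`). -/
structure WGraph (V : Type*) [Fintype V] where
  mu : V → ℝ
  w : V → V → ℝ
  mu_pos : ∀ x, 0 < mu x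
  w_symm : ∀ x y, w x y = w y x
  w_nonneg : ∀ x y, 0 ≤ w x y

variable {V : Type*} [Fintype V]

/-- Integration on the graph: `∫_V f dμ = Σ_x μ(x) f(x)`. -/
def WGraph.integral (G : WGraph V) (f : V → ℝ) : ℝ := ∑ x, G.mu x * f x

/-- The μ-Laplacian: `Δu(x) = (1/μ(x)) Σ_y ω_{xy}(u(y)-u(x))`. -/
def WGraph.lap (G : WGraph V) (u : V → ℝ) (x : V) : ℝ :=
  (∑ y, G.w x y * (u y - u x)) / G.mu x

/-- Discrete Dirichlet pairing `∫_V ∇u∇v dμ = (1/2)Σ_xΣ_y ω_{xy}(u(y)-u(x))(v(y)-v(x))`. -/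
def WGraph.dirichlet (G : WGraph V) (u v : V → ℝ) : ℝ :=
  (1 / 2) * ∑ x, ∑ y, G.w x y * (u y - u x) * (v y - v x)

/-- Connectedness: any two vertices are joined by a finite chain of edges. -/
def WGraph.Connected (G : WGraph V) : Prop :=
  ∀ x y : V, Relation.ReflTransGen (fun a b => 0 < G.w a b) x y

/-- `‖u‖²_{1,a} = ∫_V (|∇u|² + a u²) dμ`. -/
def WGraph.norm1aSq (G : WGraph V) (a : V → ℝ) (u : V → ℝ) : ℝ :=
  G.dirichlet u u + G.integral (fun x => a x * u x ^ 2)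

/-- The first eigenvalue `λ_a` of `-Δ + a`, as the infimum of the Rayleigh quotient. -/
noncomputable def rayleighInf (G : WGraph V) (a : V → ℝ) : ℝ :=
  sInf {r : ℝ | ∃ u : V → ℝ, u ≠ 0 ∧
    r = G.norm1aSq a u / G.integral (fun x => u x ^ 2)}

/-- The energy functional `J(u) = (1/2)∫(|∇u|²+au²)dμ - (1/(p+1))∫|u|^{p+1}dμ`. -/
noncomputable def WGraph.J (G : WGraph V) (a : V → ℝ) (p : ℝ) (u : V → ℝ) : ℝ :=
  (1/2) * G.norm1aSq a u - (1/(p+1)) * G.integral (fun x => |u x| ^ (p+1))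

/-- The Nehari functional `N(u) = ∫(|∇u|²+au²)dμ - ∫|u|^{p+1}dμ`. -/
noncomputable def WGraph.nehari (G : WGraph V) (a : V → ℝ) (p : ℝ) (u : V → ℝ) : ℝ :=
  G.norm1aSq a u - G.integral (fun x => |u x| ^ (p+1))

/-- The Sobolev-type constant `Λ`. -/
noncomputable def sobolevInf (G : WGraph V) (a : V → ℝ) (p : ℝ) : ℝ :=
  sInf {r : ℝ | ∃ u : V → ℝ, u ≠ 0 ∧
    r = G.norm1aSq a u / (G.integral (fun x => |u x| ^ (p+1))) ^ (2/(p+1))}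

/-- The depth `r` of the potential well. -/
noncomputable def wellDepth (G : WGraph V) (a : V → ℝ) (p : ℝ) : ℝ :=
  sInf {r : ℝ | ∃ u : V → ℝ, u ≠ 0 ∧ G.nehari a p u = 0 ∧ r = G.J a p u}


open Finset Real Set Filter Topology

set_option linter.unusedSectionVars false
section aux
variable {V : Type*} [Fintype V] [Nonempty V]

lemma le_phi' (v : V → ℝ) (x : V) : v x ≤ ⨆ y, v y :=
  le_ciSup (Set.Finite.bddAbove (Set.finite_range v)) x

lemma exists_phi' (v : V → ℝ) : ∃ x₀, (⨆ y, v y) = v x₀ := by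
  obtain ⟨x₀, h⟩ := Finite.exists_max v
  exact ⟨x₀, le_antisymm (ciSup_le h) (le_phi' v x₀)⟩

lemma phi_continuousOn' {u : V → ℝ → ℝ} {S : Set ℝ}
    (h : ∀ x, ContinuousOn (u x) S) :
    ContinuousOn (fun t => ⨆ x, u x t) S := by
  intro t ht
  have h2 : Filter.Tendsto (fun b => Finset.univ.sup' Finset.univ_nonempty (fun x => u x b))
      (nhdsWithin t S) (nhds (Finset.univ.sup' Finset.univ_nonempty (fun x => u x t))) :=
    Filter.Tendsto.finset_sup'_nhds_apply _ (fun i _ => h i t ht)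
  simpa only [Finset.sup'_univ_eq_ciSup, ContinuousWithinAt] using h2

end aux

lemma slope_tendsto' {f : ℝ → ℝ} {d T t : ℝ} (ht : t ∈ Set.Ico 0 T)
    (hd : HasDerivWithinAt f d (Set.Ico 0 T) t) :
    Filter.Tendsto (slope f t) (nhdsWithin t (Set.Ioi t)) (nhds d) := by
  have hmem : Set.Ico 0 T \ {t} ∈ nhdsWithin t (Set.Ioi t) := by
    filter_upwards [Ioo_mem_nhdsGT_of_mem (⟨le_rfl, ht.2⟩ : t ∈ Set.Ico t T)] with z hz
    exact ⟨⟨le_trans ht.1 hz.1.le, hz.2⟩, ne_of_gt hz.1⟩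
  exact (hasDerivWithinAt_iff_tendsto_slope.1 hd).mono_left (nhdsWithin_le_of_mem hmem)

lemma cont_tendsto' {f : ℝ → ℝ} {T t : ℝ} (ht : t ∈ Set.Ico 0 T)
    (hc : ContinuousWithinAt f (Set.Ico 0 T) t) :
    Filter.Tendsto f (nhdsWithin t (Set.Ioi t)) (nhds (f t)) := by
  have hmem : Set.Ico 0 T ∈ nhdsWithin t (Set.Ioi t) := by
    filter_upwards [Ioo_mem_nhdsGT_of_mem (⟨le_rfl, ht.2⟩ : t ∈ Set.Ico t T)] with z hz
    exact ⟨le_trans ht.1 hz.1.le, hz.2⟩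
  exact hc.mono_left (nhdsWithin_le_of_mem hmem)

lemma barrier_deriv' {c β q : ℝ} (s t : ℝ) (hg : c - β * (t - s) ≠ 0) :
    HasDerivAt (fun τ => (c - β * (τ - s)) ^ q)
      ((-β) * q * (c - β * (t - s)) ^ (q - 1)) t := by
  have h1 : HasDerivAt (fun τ => c - β * (τ - s)) (-β) t := by
    simpa using (((hasDerivAt_id t).sub_const s).const_mul β).const_sub c
  exact h1.rpow_const (Or.inl hg)

set_option maxHeartbeats 1000000 in
/-- blow-up rate: if a nonnegative solution of
`∂_t u = Δu - au + u^p` blows up in `L∞` as `t → T⁻`, then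
`(T-t)(max_x u(x,t))^{p-1} → 1/(p-1)`. -/
theorem blowup_rate {V : Type*} [Fintype V] [Nonempty V]
    (G : WGraph V) (T p : ℝ) (hT : 0 < T) (hp : 1 < p)
    (a : V → ℝ) (ha : ∀ x, 0 ≤ a x)
    (u u' : V → ℝ → ℝ)
    (hnonneg : ∀ x, ∀ t ∈ Set.Ico (0:ℝ) T, 0 ≤ u x t)
    (hderiv : ∀ x, ∀ t ∈ Set.Ico (0:ℝ) T,
      HasDerivWithinAt (u x) (u' x t) (Set.Ico 0 T) t)
    (heq : ∀ x, ∀ t ∈ Set.Ico (0:ℝ) T,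
      u' x t = G.lap (fun y => u y t) x - a x * u x t + u x t ^ p)
    (hblow : Filter.Tendsto (fun t => ⨆ x, u x t)
      (nhdsWithin T (Set.Iio T)) Filter.atTop) :
    Filter.Tendsto (fun t => (T - t) * (⨆ x, u x t) ^ (p - 1))
      (nhdsWithin T (Set.Iio T)) (nhds (1 / (p - 1))) := by
  classical
  have hp1 : (0:ℝ) < p - 1 := sub_pos.2 hp
  set φ : ℝ → ℝ := fun t => ⨆ x, u x t with hφdef
  have hle : ∀ t (x : V), u x t ≤ φ t := fun t x => le_phi' (fun y => u y t) x
  have hex : ∀ t, ∃ x₀, φ t = u x₀ t := fun t => exists_phi' (fun y => u y t)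
  have hcont : ∀ x, ContinuousOn (u x) (Set.Ico 0 T) :=
    fun x t ht => (hderiv x t ht).continuousWithinAt
  have hφcont : ContinuousOn φ (Set.Ico 0 T) := phi_continuousOn' hcont
  set A : ℝ := ⨆ x, ((∑ y, G.w x y) / G.mu x + a x) with hAdef
  have hA : ∀ x, (∑ y, G.w x y) / G.mu x + a x ≤ A := fun x => le_phi' (fun z => (∑ y, G.w z y) / G.mu z + a z) x
  -- upper bound on u' at a maximum point
  have upper_u' : ∀ t ∈ Set.Ico (0:ℝ) T, ∀ x, u x t = φ t → u' x t ≤ φ t ^ p := by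
    intro t ht x hx
    rw [heq x t ht]
    have hlap : G.lap (fun y => u y t) x ≤ 0 := by
      unfold WGraph.lap
      apply div_nonpos_of_nonpos_of_nonneg _ (G.mu_pos x).le
      apply Finset.sum_nonpos
      intro y _
      apply mul_nonpos_of_nonneg_of_nonpos (G.w_nonneg x y)
      have := hle t y
      simp only [sub_nonpos]
      linarith
    have h2 : 0 ≤ a x * u x t := mul_nonneg (ha x) (hnonneg x t ht)
    have h3 : u x t ^ p = φ t ^ p := by rw [hx]
    linarith
  -- lower bound on u' at a maximum point
  have lower_u' : ∀ t ∈ Set.Ico (0:ℝ) T, ∀ x, u x t = φ t →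
      φ t ^ p - A * φ t ≤ u' x t := by
    intro t ht x hx
    rw [heq x t ht]
    have hφ0 : 0 ≤ φ t := hx ▸ hnonneg x t ht
    have hlap : -((∑ y, G.w x y) / G.mu x) * φ t ≤ G.lap (fun y => u y t) x := by
      unfold WGraph.lap
      have key : ∀ y ∈ Finset.univ, G.w x y * (0 - u x t) ≤ G.w x y * (u y t - u x t) :=
        fun y _ => mul_le_mul_of_nonneg_left (by linarith [hnonneg y t ht]) (G.w_nonneg x y)
      have hsum := Finset.sum_le_sum key
      have heq1 : ∑ y, G.w x y * (0 - u x t) = -((∑ y, G.w x y) * φ t) := by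
        rw [hx, ← Finset.sum_mul]
        ring
      have hrw : -((∑ y, G.w x y) / G.mu x) * φ t
          = (-((∑ y, G.w x y) * φ t)) / G.mu x := by ring
      rw [hrw, ← heq1]
      exact div_le_div_of_nonneg_right hsum (G.mu_pos x).le
    have hcoef := mul_le_mul_of_nonneg_right (hA x) hφ0
    have h3 : u x t ^ p = φ t ^ p := by rw [hx]
    have h4 : a x * u x t = a x * φ t := by rw [hx]
    nlinarith
  -- Dini upper bound for slopes of φ
  have keyU : ∀ t ∈ Set.Ico (0:ℝ) T, ∀ r, φ t ^ p < r →
      ∃ᶠ z in nhdsWithin t (Set.Ioi t), slope φ t z < r := by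
    intro t ht r hr
    apply Filter.Eventually.frequently
    obtain ⟨x₀, hx₀⟩ := hex t
    have hall : ∀ x : V, ∀ᶠ z in nhdsWithin t (Set.Ioi t),
        (u x t = φ t → slope (u x) t z < r) ∧ (u x t ≠ φ t → u x z < u x₀ z) := by
      intro x
      have h1 : ∀ᶠ z in nhdsWithin t (Set.Ioi t), (u x t = φ t → slope (u x) t z < r) := by
        by_cases hx : u x t = φ t
        · have hlt : u' x t < r := lt_of_le_of_lt (upper_u' t ht x hx) hr
          filter_upwards [(slope_tendsto' ht (hderiv x t ht)).eventually_lt_const hlt]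
            with z hz
          exact fun _ => hz
        · filter_upwards with z
          exact fun h => absurd h hx
      have h2 : ∀ᶠ z in nhdsWithin t (Set.Ioi t), (u x t ≠ φ t → u x z < u x₀ z) := by
        by_cases hx : u x t = φ t
        · filter_upwards with z
          exact fun h => absurd hx h
        · have hlt : u x t < u x₀ t := by
            rcases lt_or_eq_of_le (hle t x) with h | h
            · rw [hx₀] at h; exact h
            · exact absurd h hx
          have hev := Filter.Tendsto.eventually_lt
            (cont_tendsto' ht (hcont x t ht)) (cont_tendsto' ht (hcont x₀ t ht)) hlt
          filter_upwards [hev] with z hz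
          exact fun _ => hz
      exact h1.and h2
    filter_upwards [Filter.eventually_all.2 hall, self_mem_nhdsWithin] with z hz hzt
    have hzt' : (0:ℝ) < z - t := sub_pos.2 hzt
    obtain ⟨xz, hxz⟩ := hex z
    have hxzt : u xz t = φ t := by
      by_contra hne
      have h1 := (hz xz).2 hne
      have h2 : u x₀ z ≤ u xz z := hxz ▸ hle z x₀
      exact absurd (h1.trans_le h2) (lt_irrefl _)
    have hs := (hz xz).1 hxzt
    rw [slope_def_field] at hs ⊢
    rw [div_lt_iff₀ hzt'] at hs ⊢
    have h5 : φ z - φ t = u xz z - u xz t := by rw [hxz, hxzt]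
    linarith
  -- Dini lower bound for slopes of φ (as upper bound for -φ)
  have keyL : ∀ t ∈ Set.Ico (0:ℝ) T, ∀ x₀, u x₀ t = φ t → ∀ r, -(u' x₀ t) < r →
      ∃ᶠ z in nhdsWithin t (Set.Ioi t), slope (fun τ => -φ τ) t z < r := by
    intro t ht x₀ hx₀ r hr
    apply Filter.Eventually.frequently
    have htend : Filter.Tendsto (slope (fun τ => -u x₀ τ) t)
        (nhdsWithin t (Set.Ioi t)) (nhds (-(u' x₀ t))) :=
      slope_tendsto' ht ((hderiv x₀ t ht).neg)
    filter_upwards [htend.eventually_lt_const hr, self_mem_nhdsWithin] with z hz hzt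
    have hzt' : (0:ℝ) < z - t := sub_pos.2 hzt
    rw [slope_def_field] at hz ⊢
    rw [div_lt_iff₀ hzt'] at hz ⊢
    have h1 : -φ z ≤ -u x₀ z := neg_le_neg (hle z x₀)
    linarith
  -- extraction from the blow-up hypothesis
  have hblowF : ∀ C : ℝ, ∃ t₁, 0 ≤ t₁ ∧ t₁ < T ∧ ∀ t, t₁ < t → t < T → C ≤ φ t := by
    intro C
    have hev : ∀ᶠ t in nhdsWithin T (Set.Iio T), C ≤ φ t := hblow.eventually_ge_atTop C
    obtain ⟨l, hl, hsub⟩ := mem_nhdsLT_iff_exists_Ioo_subset.mp hev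
    exact ⟨max l 0, le_max_right _ _, max_lt hl hT,
      fun t h1 h2 => hsub ⟨(le_max_left l 0).trans_lt h1, h2⟩⟩
  -- exponent algebra
  set q : ℝ := -(1/(p-1)) with hqdef
  clear_value q
  have hqneg : q < 0 := by
    rw [hqdef]; simp only [neg_lt, neg_zero]; positivity
  have hqp : q * p = q - 1 := by
    rw [hqdef]; field_simp; ring
  have h1pq : (1 - p) * q = 1 := by
    rw [hqdef]; field_simp; ring
  have hcoefq : ∀ β : ℝ, (-β) * q = β / (p - 1) := by
    intro β; rw [hqdef]; field_simp
  -- Lower bound: (T-s) φ(s)^{p-1} ≥ 1/(p-1)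
  have claim_L : ∀ s ∈ Set.Ico (0:ℝ) T, 0 < φ s → φ s ^ (1 - p) ≤ (p - 1) * (T - s) := by
    intro s hs hφs
    by_contra hcon
    push_neg at hcon
    set c : ℝ := φ s ^ (1 - p) with hc
    have hc0 : 0 < c := by rw [hc]; exact Real.rpow_pos_of_pos hφs _
    have hTs : 0 < T - s := sub_pos.2 hs.2
    clear_value c
    set β : ℝ := ((p - 1) + c / (T - s)) / 2 with hβ
    clear_value β
    have hcd : (p - 1) < c / (T - s) := (lt_div_iff₀ hTs).2 hcon
    have hβ1 : p - 1 < β := by rw [hβ]; linarith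
    have hβ0 : 0 < β := lt_trans hp1 hβ1
    have hβ2 : β * (T - s) < c := by
      have h1 : c / (T - s) * (T - s) = c := div_mul_cancel₀ c hTs.ne'
      have h2 : β * (T - s) = ((p-1) * (T - s) + c / (T - s) * (T - s)) / 2 := by
        rw [hβ]; ring
      rw [h1] at h2; nlinarith
    set m : ℝ := c - β * (T - s) with hm
    clear_value m
    have hm0 : 0 < m := by rw [hm]; linarith
    have hgm : ∀ t, s ≤ t → t ≤ T → m ≤ c - β * (t - s) := by
      intro t h1 h2; rw [hm]; nlinarith
    have hg0 : ∀ t, s ≤ t → t ≤ T → 0 < c - β * (t - s) :=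
      fun t h1 h2 => lt_of_lt_of_le hm0 (hgm t h1 h2)
    have hBs : c ^ q = φ s := by
      rw [hc, ← Real.rpow_mul hφs.le, h1pq, Real.rpow_one]
    have main : ∀ b, s < b → b < T → ∀ t ∈ Set.Icc s b, φ t ≤ (c - β * (t - s)) ^ q := by
      intro b hsb hbT
      have hIcc : Set.Icc s b ⊆ Set.Ico 0 T :=
        fun t ht => ⟨le_trans hs.1 ht.1, lt_of_le_of_lt ht.2 hbT⟩
      have hIco : Set.Ico s b ⊆ Set.Ico 0 T :=
        fun t ht => ⟨le_trans hs.1 ht.1, lt_trans ht.2 hbT⟩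
      have hgpos : ∀ t ∈ Set.Icc s b, 0 < c - β * (t - s) :=
        fun t ht => hg0 t ht.1 (le_trans ht.2 hbT.le)
      intro t ht
      refine image_le_of_liminf_slope_right_lt_deriv_boundary'
        (f := φ) (f' := fun t => φ t ^ p)
        (B := fun t => (c - β * (t - s)) ^ q)
        (B' := fun t => (-β) * q * (c - β * (t - s)) ^ (q - 1))
        (hφcont.mono hIcc) ?_ ?_ ?_ ?_ ?_ ht
      · intro x hx r hr
        exact keyU x (hIco hx) r hr
      · show φ s ≤ (c - β * (s - s)) ^ q
        rw [sub_self, mul_zero, sub_zero, hBs]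
      · intro x hx
        exact (barrier_deriv' s x (hgpos x hx).ne').continuousAt.continuousWithinAt
      · intro x hx
        exact (barrier_deriv' s x (hgpos x (Set.Ico_subset_Icc_self hx)).ne').hasDerivWithinAt
      · intro x hx hcontact
        have hgx : 0 < c - β * (x - s) := hgpos x (Set.Ico_subset_Icc_self hx)
        have hBp : ((c - β * (x - s)) ^ q) ^ p = (c - β * (x - s)) ^ (q - 1) := by
          rw [← Real.rpow_mul hgx.le, hqp]
        show φ x ^ p < -β * q * (c - β * (x - s)) ^ (q - 1)
        rw [show φ x = (c - β * (x - s)) ^ q from hcontact, hBp]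
        have hcoef : 1 < (-β) * q := by
          rw [hcoefq β, lt_div_iff₀ hp1]; linarith
        have hpow : 0 < (c - β * (x - s)) ^ (q - 1) := Real.rpow_pos_of_pos hgx _
        nlinarith
    have bounded : ∀ t, s ≤ t → t < T → φ t ≤ m ^ q := by
      intro t hst htT
      have h2 : (c - β * (t - s)) ^ q ≤ m ^ q :=
        Real.rpow_le_rpow_of_nonpos hm0 (hgm t hst htT.le) hqneg.le
      rcases eq_or_lt_of_le hst with h | h
      · have h3 : (c - β * (t - s)) = c := by rw [← h]; ring
        rw [h3] at h2
        subst h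
        rw [← hBs]
        exact h2
      · exact le_trans (main t h htT t ⟨hst, le_rfl⟩) h2
    obtain ⟨t₁, ht₁0, ht₁T, ht₁⟩ := hblowF (m ^ q + 1)
    have h1 : max t₁ s < T := max_lt ht₁T hs.2
    set t₂ : ℝ := (max t₁ s + T) / 2 with ht₂def
    have h2 : max t₁ s < t₂ := by rw [ht₂def]; linarith
    have h4 : t₂ < T := by rw [ht₂def]; linarith
    have h5 := ht₁ t₂ (lt_of_le_of_lt (le_max_left t₁ s) h2) h4
    have h6 := bounded t₂ (le_of_lt (lt_of_le_of_lt (le_max_right t₁ s) h2)) h4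
    linarith
  -- Upper bound with loss ε
  have claim_U : ∀ ε : ℝ, 0 < ε → ε < 1/2 → ∀ s, 0 ≤ s → s < T →
      (∀ t, s ≤ t → t < T → 1 ≤ φ t ∧ A ≤ ε * φ t ^ (p - 1)) →
      (p - 1) * (1 - 2*ε) * (T - s) ≤ φ s ^ (1 - p) := by
    intro ε hε0 hε2 s hs0 hsT hprop
    set β : ℝ := (p - 1) * (1 - 2*ε) with hβdef
    clear_value β
    have h2ε : 0 < 1 - 2*ε := by linarith
    have hβ0 : 0 < β := by rw [hβdef]; exact mul_pos hp1 h2ε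
    have hφs1 : 1 ≤ φ s := (hprop s le_rfl hsT).1
    have hφs : 0 < φ s := lt_of_lt_of_le one_pos hφs1
    set c : ℝ := φ s ^ (1 - p) with hc
    clear_value c
    have hc0 : 0 < c := by rw [hc]; exact Real.rpow_pos_of_pos hφs _
    by_contra hcon
    push_neg at hcon
    set τ : ℝ := s + c / β with hτdef
    clear_value τ
    have hsτ : s < τ := by rw [hτdef]; have := div_pos hc0 hβ0; linarith
    have hτT : τ < T := by
      rw [hτdef]
      have : c / β < T - s := (div_lt_iff₀' hβ0).2 (by linarith)
      linarith
    have hcβ : β * (τ - s) = c := by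
      have hτs : τ - s = c / β := by rw [hτdef]; ring
      rw [hτs]; field_simp
    have hg0 : ∀ t, s ≤ t → t < τ → 0 < c - β * (t - s) := by
      intro t h1 h2; nlinarith [mul_pos hβ0 (sub_pos.2 h2)]
    have hBs : c ^ q = φ s := by
      rw [hc, ← Real.rpow_mul hφs.le, h1pq, Real.rpow_one]
    have main2 : ∀ b, s < b → b < τ → ∀ t ∈ Set.Icc s b, (c - β * (t - s)) ^ q ≤ φ t := by
      intro b hsb hbτ
      have hbT : b < T := hbτ.trans hτT
      have hIcc : Set.Icc s b ⊆ Set.Ico 0 T :=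
        fun t ht => ⟨le_trans hs0 ht.1, lt_of_le_of_lt ht.2 hbT⟩
      have hIco : Set.Ico s b ⊆ Set.Ico 0 T :=
        fun t ht => ⟨le_trans hs0 ht.1, lt_trans ht.2 hbT⟩
      have hgpos : ∀ t ∈ Set.Icc s b, 0 < c - β * (t - s) :=
        fun t ht => hg0 t ht.1 (lt_of_le_of_lt ht.2 hbτ)
      intro t ht
      have hres := image_le_of_liminf_slope_right_lt_deriv_boundary'
        (f := fun t => -φ t) (f' := fun t => -((1-ε) * φ t ^ p))
        (B := fun t => -((c - β * (t - s)) ^ q))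
        (B' := fun t => -((-β) * q * (c - β * (t - s)) ^ (q - 1)))
        ((hφcont.mono hIcc).neg) ?_ ?_ ?_ ?_ ?_ ht
      · show (c - β * (t - s)) ^ q ≤ φ t
        have : -φ t ≤ -((c - β * (t - s)) ^ q) := hres
        linarith
      · intro x hx r hr
        obtain ⟨x₀, hx₀⟩ := hex x
        have hxI : x ∈ Set.Ico 0 T := hIco hx
        have hxP := hprop x hx.1 hxI.2
        have hφxpos : (0:ℝ) < φ x := lt_of_lt_of_le one_pos hxP.1
        have hlow := lower_u' x hxI x₀ hx₀.symm
        have hAφ : A * φ x ≤ ε * φ x ^ p := by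
          have h1 := mul_le_mul_of_nonneg_right hxP.2 hφxpos.le
          have h2 : φ x ^ (p-1) * φ x = φ x ^ p := by
            rw [← Real.rpow_add_one hφxpos.ne' (p-1)]; ring_nf
          calc A * φ x ≤ ε * φ x ^ (p-1) * φ x := h1
            _ = ε * φ x ^ p := by rw [mul_assoc, h2]
        have hu' : (1-ε) * φ x ^ p ≤ u' x₀ x := by
          have hexp : (1-ε) * φ x ^ p = φ x ^ p - ε * φ x ^ p := by ring
          rw [hexp]; linarith
        have hr2 : -((1-ε) * φ x ^ p) < r := hr
        exact keyL x hxI x₀ hx₀.symm r (by linarith)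
      · show -φ s ≤ -((c - β * (s - s)) ^ q)
        rw [sub_self, mul_zero, sub_zero, hBs]
      · intro x hx
        exact ((barrier_deriv' s x (hgpos x hx).ne').continuousAt.continuousWithinAt).neg
      · intro x hx
        exact ((barrier_deriv' s x
          (hgpos x (Set.Ico_subset_Icc_self hx)).ne').hasDerivWithinAt).neg
      · intro x hx hcontact
        have hgx : 0 < c - β * (x - s) := hgpos x (Set.Ico_subset_Icc_self hx)
        have hφeq : φ x = (c - β * (x - s)) ^ q := by
          have h1 : -φ x = -((c - β * (x - s)) ^ q) := hcontact
          linarith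
        have hφxpos : 0 < φ x := hφeq ▸ Real.rpow_pos_of_pos hgx q
        have hgq : (c - β * (x - s)) ^ (q - 1) = φ x ^ p := by
          rw [hφeq, ← Real.rpow_mul hgx.le, hqp]
        show -((1-ε) * φ x ^ p) < -((-β) * q * (c - β * (x - s)) ^ (q - 1))
        rw [hgq, hcoefq β, hβdef]
        have hcoef : (p - 1) * (1 - 2*ε) / (p - 1) = 1 - 2*ε := by
          field_simp
        rw [hcoef]
        have hpp : 0 < ε * φ x ^ p := mul_pos hε0 (Real.rpow_pos_of_pos hφxpos p)
        nlinarith [hpp]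
    -- contradiction via continuity of φ at τ < T
    have hsubIcc : Set.Icc s τ ⊆ Set.Ico 0 T :=
      fun t ht => ⟨le_trans hs0 ht.1, lt_of_le_of_lt ht.2 hτT⟩
    obtain ⟨z, hz, hzmax⟩ := isCompact_Icc.exists_isMaxOn (Set.nonempty_Icc.2 hsτ.le)
      (hφcont.mono hsubIcc)
    set M : ℝ := φ z with hMdef
    clear_value M
    have hM0 : 0 < M := by
      rw [hMdef]; exact lt_of_lt_of_le hφs (hzmax ⟨le_rfl, hsτ.le⟩)
    set δ : ℝ := M ^ (1-p) / β with hδdef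
    clear_value δ
    have hδ0 : 0 < δ := by rw [hδdef]; exact div_pos (Real.rpow_pos_of_pos hM0 _) hβ0
    have hmaxlt : max s (τ - δ) < τ := max_lt hsτ (by linarith)
    set t₂ : ℝ := (max s (τ - δ) + τ) / 2 with ht₂def
    clear_value t₂
    have h2 : max s (τ - δ) < t₂ := by rw [ht₂def]; linarith
    have hst₂ : s < t₂ := lt_of_le_of_lt (le_max_left _ _) h2
    have ht₂τ : t₂ < τ := by rw [ht₂def]; linarith
    have hD := main2 t₂ hst₂ ht₂τ t₂ ⟨hst₂.le, le_rfl⟩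
    have hgt₂ : 0 < c - β * (t₂ - s) := hg0 t₂ hst₂.le ht₂τ
    have hDpos : 0 < (c - β * (t₂ - s)) ^ q := Real.rpow_pos_of_pos hgt₂ q
    have hφt₂pos : 0 < φ t₂ := lt_of_lt_of_le hDpos hD
    have hφt₂M : φ t₂ ≤ M := by rw [hMdef]; exact hzmax ⟨hst₂.le, ht₂τ.le⟩
    have chain1 : M ^ (1-p) ≤ φ t₂ ^ (1-p) :=
      Real.rpow_le_rpow_of_nonpos hφt₂pos hφt₂M (by linarith)
    have chain2 : φ t₂ ^ (1-p) ≤ ((c - β * (t₂ - s)) ^ q) ^ (1-p) :=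
      Real.rpow_le_rpow_of_nonpos hDpos hD (by linarith)
    have hq1 : q * (1-p) = 1 := by rw [hqdef]; field_simp; ring
    have chain3 : ((c - β * (t₂ - s)) ^ q) ^ (1-p) = c - β * (t₂ - s) := by
      rw [← Real.rpow_mul hgt₂.le, hq1, Real.rpow_one]
    have hfin1 : c - β * (t₂ - s) = β * (τ - t₂) := by rw [← hcβ]; ring
    have hfin2 : β * (τ - t₂) < β * δ :=
      mul_lt_mul_of_pos_left (by linarith [le_max_right s (τ - δ)]) hβ0
    have hfin3 : β * δ = M ^ (1-p) := by rw [hδdef]; field_simp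
    linarith
  -- Final squeeze
  rw [tendsto_order]
  constructor
  · intro b hb
    obtain ⟨t₁, ht₁0, ht₁T, ht₁⟩ := hblowF 1
    filter_upwards [Ioo_mem_nhdsLT_of_mem (⟨ht₁T, le_rfl⟩ : T ∈ Set.Ioc t₁ T)] with s hsmem
    have hs0 : (0:ℝ) ≤ s := le_trans ht₁0 hsmem.1.le
    have hφs1 : 1 ≤ φ s := ht₁ s hsmem.1 hsmem.2
    have hφpos : 0 < φ s := lt_of_lt_of_le one_pos hφs1
    have hL := claim_L s ⟨hs0, hsmem.2⟩ hφpos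
    have hpow0 : 0 < φ s ^ (p - 1) := Real.rpow_pos_of_pos hφpos _
    have hmul : φ s ^ (1 - p) * φ s ^ (p - 1) = 1 := by
      rw [← Real.rpow_add hφpos]
      norm_num
    have hkey : 1 ≤ (p - 1) * ((T - s) * φ s ^ (p - 1)) := by
      calc (1:ℝ) = φ s ^ (1 - p) * φ s ^ (p - 1) := hmul.symm
        _ ≤ (p - 1) * (T - s) * φ s ^ (p - 1) := mul_le_mul_of_nonneg_right hL hpow0.le
        _ = (p - 1) * ((T - s) * φ s ^ (p - 1)) := by ring
    calc b < 1 / (p - 1) := hb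
      _ ≤ (T - s) * φ s ^ (p - 1) := by
          rw [div_le_iff₀ hp1]
          linarith
  · intro b hb
    have hb' : 1 / (p - 1) < b := hb
    have hbpos : (0:ℝ) < b := lt_trans (by positivity) hb'
    have hκ1 : 1 / ((p - 1) * b) < 1 := by
      rw [div_lt_one (by positivity)]
      rw [div_lt_iff₀ hp1] at hb'
      linarith
    have hκpos : 0 < 1 / ((p - 1) * b) := by positivity
    set κ : ℝ := 1 / ((p - 1) * b) with hκdef
    clear_value κ
    set ε : ℝ := (1 - κ) / 4 with hεdef
    clear_value ε
    have hε0 : 0 < ε := by rw [hεdef]; linarith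
    have hε2 : ε < 1 / 2 := by rw [hεdef]; linarith
    have h12 : κ < 1 - 2 * ε := by rw [hεdef]; linarith
    obtain ⟨t₁, ht₁0, ht₁T, ht₁⟩ := hblowF (max 1 ((A / ε) ^ (1 / (p - 1))))
    filter_upwards [Ioo_mem_nhdsLT_of_mem (⟨ht₁T, le_rfl⟩ : T ∈ Set.Ioc t₁ T)] with s hsmem
    have hs0 : (0:ℝ) ≤ s := le_trans ht₁0 hsmem.1.le
    have hprop : ∀ t, s ≤ t → t < T → 1 ≤ φ t ∧ A ≤ ε * φ t ^ (p - 1) := by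
      intro t hst htT
      have hC := ht₁ t (lt_of_lt_of_le hsmem.1 hst) htT
      have h1 : 1 ≤ φ t := le_trans (le_max_left _ _) hC
      have hφtpos : 0 < φ t := lt_of_lt_of_le one_pos h1
      refine ⟨h1, ?_⟩
      have h2 : (A / ε) ^ (1 / (p - 1)) ≤ φ t := le_trans (le_max_right _ _) hC
      have hAε0 : (0:ℝ) ≤ A / ε := by
        apply div_nonneg _ hε0.le
        refine le_trans ?_ (hA (Classical.arbitrary V))
        have hx := Classical.arbitrary V
        exact add_nonneg (div_nonneg (Finset.sum_nonneg fun y _ => G.w_nonneg _ y)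
          (G.mu_pos _).le) (ha _)
      have hAε : A / ε ≤ φ t ^ (p - 1) := by
        have h3 := Real.rpow_le_rpow (Real.rpow_nonneg hAε0 _) h2 (le_of_lt hp1)
        rwa [← Real.rpow_mul hAε0, one_div, inv_mul_cancel₀ hp1.ne', Real.rpow_one] at h3
      calc A = ε * (A / ε) := by field_simp
        _ ≤ ε * φ t ^ (p - 1) := mul_le_mul_of_nonneg_left hAε hε0.le
    have hU := claim_U ε hε0 hε2 s hs0 hsmem.2 hprop
    have hφs1 : 1 ≤ φ s := (hprop s le_rfl hsmem.2).1
    have hφpos : 0 < φ s := lt_of_lt_of_le one_pos hφs1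
    have hpow0 : 0 < φ s ^ (p - 1) := Real.rpow_pos_of_pos hφpos _
    have hmul : φ s ^ (1 - p) * φ s ^ (p - 1) = 1 := by
      rw [← Real.rpow_add hφpos]
      norm_num
    have h2ε : 0 < 1 - 2 * ε := by linarith
    have hd : 0 < (p - 1) * (1 - 2 * ε) := mul_pos hp1 h2ε
    have hkey : (p - 1) * (1 - 2 * ε) * ((T - s) * φ s ^ (p - 1)) ≤ 1 := by
      calc (p - 1) * (1 - 2 * ε) * ((T - s) * φ s ^ (p - 1))
          = ((p - 1) * (1 - 2 * ε) * (T - s)) * φ s ^ (p - 1) := by ring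
        _ ≤ φ s ^ (1 - p) * φ s ^ (p - 1) := mul_le_mul_of_nonneg_right hU hpow0.le
        _ = 1 := hmul
    have hκprod : κ * ((p - 1) * b) = 1 := by
      rw [hκdef]
      field_simp
    have hlt : 1 / ((p - 1) * (1 - 2 * ε)) < b := by
      rw [div_lt_iff₀ hd]
      nlinarith [h12, hbpos, hp1, hκprod]
    calc (T - s) * φ s ^ (p - 1) ≤ 1 / ((p - 1) * (1 - 2 * ε)) := by
          rw [le_div_iff₀ hd]
          linarith
      _ < b := hlt
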